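/- The generating function identity Σ_λ x^{(|λ| - (2d² - d))/2}, summed over partitions λ with angle color 0 and d(λ) = d, equals Π_{k≥1} 1/(1-x^k)², as a formal power series in x. Equivalently: the number of partitions λ with d(λ) = d and |λ| = 2d² - d + 2n equals the number of pairs of partitions with total size n. -/

import Mathlib

/-- `d(μ) = N₀(μ) - N₁(μ)` for a Young diagram colored with angle color 0. -/
def dcol0 (μ : YoungDiagram) : ℤ :=
  ((μ.cells.filter fun c => (c.1 + c.2) % 2 = 0).card : ℤ) -
    ((μ.cells.filter fun c => (c.1 + c.2) % 2 = 1).card : ℤ)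

namespace GFC

open Finset

/-- Young diagram from an antitone, eventually-zero row-length function. -/
def ofFn (f : ℕ → ℕ) (hf : Antitone f) (N : ℕ) (hN : ∀ i, N ≤ i → f i = 0) :
    YoungDiagram where
  cells := (Finset.range N ×ˢ Finset.range (f 0)).filter fun c => c.2 < f c.1
  isLowerSet := by
    rintro ⟨i2, j2⟩ ⟨i1, j1⟩ ⟨hi, hj⟩ h
    simp only [Finset.coe_filter, Set.mem_setOf_eq, Finset.mem_product, Finset.mem_range] at *
    have h2 : f i2 ≤ f i1 := hf hi
    exact ⟨⟨lt_of_le_of_lt hi h.1.1, lt_of_le_of_lt hj h.1.2⟩,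
      lt_of_le_of_lt hj (lt_of_lt_of_le h.2 h2)⟩

theorem mem_ofFn (f : ℕ → ℕ) (hf : Antitone f) (N : ℕ) (hN : ∀ i, N ≤ i → f i = 0)
    (i j : ℕ) : (i, j) ∈ ofFn f hf N hN ↔ j < f i := by
  show (i, j) ∈ Finset.filter _ _ ↔ _
  simp only [Finset.mem_filter, Finset.mem_product, Finset.mem_range]
  constructor
  · rintro ⟨-, h⟩; exact h
  · intro h
    have hiN : i < N := by
      by_contra hc
      rw [hN i (le_of_not_gt hc)] at h; omega
    exact ⟨⟨hiN, lt_of_lt_of_le h (hf (Nat.zero_le i))⟩, h⟩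

/-- Two Young diagrams with the same row lengths are equal. -/
theorem eq_of_rowLen_eq (μ ν : YoungDiagram) (h : ∀ i, μ.rowLen i = ν.rowLen i) : μ = ν := by
  ext ⟨i, j⟩
  rw [YoungDiagram.mem_cells, YoungDiagram.mem_cells, YoungDiagram.mem_iff_lt_rowLen,
    YoungDiagram.mem_iff_lt_rowLen, h i]

theorem rowLen_ofFn (f : ℕ → ℕ) (hf : Antitone f) (N : ℕ) (hN : ∀ i, N ≤ i → f i = 0)
    (i : ℕ) : (ofFn f hf N hN).rowLen i = f i := by
  have key : ∀ j : ℕ, j < (ofFn f hf N hN).rowLen i ↔ j < f i := by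
    intro j
    rw [← YoungDiagram.mem_iff_lt_rowLen, mem_ofFn]
  rcases Nat.lt_trichotomy ((ofFn f hf N hN).rowLen i) (f i) with h | h | h
  · have := (key _).2 h; omega
  · exact h
  · have := (key _).1 h; omega

theorem rowLen_eventually_zero (μ : YoungDiagram) (i : ℕ) (hi : μ.colLen 0 ≤ i) :
    μ.rowLen i = 0 := by
  by_contra h
  have : (i, 0) ∈ μ := YoungDiagram.mem_iff_lt_rowLen.2 (Nat.pos_of_ne_zero h)
  rw [YoungDiagram.mem_iff_lt_colLen] at this
  omega

theorem rowLen_antitone (μ : YoungDiagram) : Antitone μ.rowLen :=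
  fun _ _ h => μ.rowLen_anti _ _ h

/-- cells as a disjoint union of rows. -/
theorem cells_eq_biUnion (μ : YoungDiagram) (N : ℕ) (hN : ∀ i, N ≤ i → μ.rowLen i = 0) :
    μ.cells = (Finset.range N).biUnion fun i => μ.row i := by
  ext ⟨i, j⟩
  simp only [Finset.mem_biUnion, Finset.mem_range, YoungDiagram.mem_row_iff,
    YoungDiagram.mem_cells]
  constructor
  · intro h
    refine ⟨i, ?_, h, rfl⟩
    by_contra hc
    rw [YoungDiagram.mem_iff_lt_rowLen, hN i (le_of_not_gt hc)] at h; omega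
  · rintro ⟨i', -, h, rfl⟩; exact h

theorem card_eq_sum_rowLen (μ : YoungDiagram) (N : ℕ) (hN : ∀ i, N ≤ i → μ.rowLen i = 0) :
    μ.card = ∑ i ∈ Finset.range N, μ.rowLen i := by
  rw [YoungDiagram.card, cells_eq_biUnion μ N hN, Finset.card_biUnion]
  · exact Finset.sum_congr rfl fun i _ => (μ.rowLen_eq_card (i := i)).symm
  · intro a _ b _ hab
    simp only [Finset.disjoint_left, YoungDiagram.mem_row_iff]
    rintro ⟨x, y⟩ ⟨-, rfl⟩ ⟨-, h⟩
    exact hab h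

/-- signed parity contribution of a row -/
def rdiff (i L : ℕ) : ℤ := if L % 2 = 0 then 0 else if i % 2 = 0 then 1 else -1

theorem row_diff (i L : ℕ) :
    ((((Finset.range L).filter fun j => (i + j) % 2 = 0)).card : ℤ) -
      (((Finset.range L).filter fun j => (i + j) % 2 = 1)).card = rdiff i L := by
  induction L with
  | zero => simp [rdiff]
  | succ L ih =>
    rw [Finset.range_add_one, Finset.filter_insert, Finset.filter_insert]
    by_cases h : (i + L) % 2 = 0
    · rw [if_pos h, if_neg (by omega), Finset.card_insert_of_notMem (by simp)]
      push_cast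
      unfold rdiff at ih ⊢
      split_ifs at ih ⊢ <;> omega
    · rw [if_neg h, if_pos (by omega), Finset.card_insert_of_notMem (by simp)]
      push_cast
      unfold rdiff at ih ⊢
      split_ifs at ih ⊢ <;> omega

theorem row_filter_card (μ : YoungDiagram) (i r : ℕ) :
    ((μ.row i).filter fun c => (c.1 + c.2) % 2 = r).card =
      ((Finset.range (μ.rowLen i)).filter fun j => (i + j) % 2 = r).card := by
  apply Finset.card_bij (fun c _ => c.2)
  · rintro ⟨a, b⟩ hc
    simp only [Finset.mem_filter, YoungDiagram.mem_row_iff] at hc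
    obtain ⟨⟨hmem, rfl⟩, hr⟩ := hc
    simp only [Finset.mem_filter, Finset.mem_range]
    exact ⟨YoungDiagram.mem_iff_lt_rowLen.1 hmem, hr⟩
  · rintro ⟨a, b⟩ ha ⟨a', b'⟩ ha' h
    simp only [Finset.mem_filter, YoungDiagram.mem_row_iff] at ha ha'
    obtain ⟨⟨-, rfl⟩, -⟩ := ha
    obtain ⟨⟨-, rfl⟩, -⟩ := ha'
    simpa using h
  · intro j hj
    simp only [Finset.mem_filter, Finset.mem_range] at hj
    refine ⟨(i, j), ?_, rfl⟩
    simp only [Finset.mem_filter, YoungDiagram.mem_row_iff]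
    exact ⟨⟨YoungDiagram.mem_iff_lt_rowLen.2 hj.1, by simp⟩, hj.2⟩

theorem filter_cells_card (μ : YoungDiagram) (N : ℕ) (hN : ∀ i, N ≤ i → μ.rowLen i = 0)
    (r : ℕ) :
    (μ.cells.filter fun c => (c.1 + c.2) % 2 = r).card =
      ∑ i ∈ Finset.range N, ((Finset.range (μ.rowLen i)).filter fun j => (i + j) % 2 = r).card := by
  rw [cells_eq_biUnion μ N hN, Finset.filter_biUnion, Finset.card_biUnion]
  · exact Finset.sum_congr rfl fun i _ => row_filter_card μ i r
  · intro a _ b _ hab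
    simp only [Finset.disjoint_left, Finset.mem_filter, YoungDiagram.mem_row_iff]
    rintro ⟨x, y⟩ ⟨⟨-, rfl⟩, -⟩ ⟨⟨-, h⟩, -⟩
    exact hab h

theorem dcol0_eq_sum (μ : YoungDiagram) (N : ℕ) (hN : ∀ i, N ≤ i → μ.rowLen i = 0) :
    dcol0 μ = ∑ i ∈ Finset.range N, rdiff i (μ.rowLen i) := by
  unfold dcol0
  rw [filter_cells_card μ N hN 0, filter_cells_card μ N hN 1]
  push_cast
  rw [← Finset.sum_sub_distrib]
  exact Finset.sum_congr rfl fun i _ => row_diff i (μ.rowLen i)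


theorem infinite_parity {p : ℕ → Prop} {N e : ℕ} (hN : N % 2 = 0) (he : e < 2)
    (h : ∀ m, N ≤ m → (p m ↔ m % 2 = e)) : (setOf p).Infinite := by
  apply Set.infinite_of_injective_forall_mem (f := fun j : ℕ => N + 2 * j + e)
    (hi := fun a b hab => by dsimp at hab; omega)
  intro j
  exact (h _ (by omega)).2 (by omega)

theorem count_parity {p : ℕ → Prop} [DecidablePred p] {N e : ℕ} (hN : N % 2 = 0) (he : e < 2)
    (h : ∀ m, N ≤ m → (p m ↔ m % 2 = e)) :
    ∀ j, Nat.count p (N + 2 * j) = Nat.count p N + j := by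
  intro j
  induction j with
  | zero => simp
  | succ j ih =>
    have e1 : N + 2 * (j + 1) = (N + 2 * j + 1) + 1 := by ring
    rw [e1, Nat.count_succ, Nat.count_succ, ih]
    have h1 := h (N + 2 * j) (by omega)
    have h2 := h (N + 2 * j + 1) (by omega)
    interval_cases e
    · rw [if_pos (h1.2 (by omega)), if_neg (fun hc => by have := h2.1 hc; omega)]; omega
    · rw [if_neg (fun hc => by have := h1.1 hc; omega), if_pos (h2.2 (by omega))]; omega

theorem nth_parity {p : ℕ → Prop} [DecidablePred p] {N e : ℕ} (hN : N % 2 = 0) (he : e < 2)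
    (h : ∀ m, N ≤ m → (p m ↔ m % 2 = e)) {k : ℕ} (hk : Nat.count p N ≤ k) :
    Nat.nth p k = N + 2 * (k - Nat.count p N) + e := by
  set j := k - Nat.count p N with hj
  have hpm : p (N + 2 * j + e) := (h _ (by omega)).2 (by omega)
  have hcount : Nat.count p (N + 2 * j + e) = k := by
    interval_cases e
    · rw [Nat.add_zero, count_parity hN he h]; omega
    · have : N + 2 * j + 1 = (N + 2 * j) + 1 := rfl
      rw [this, Nat.count_succ, count_parity hN he h,
        if_neg (fun hc => by have := (h _ (by omega)).1 hc; omega)]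
      omega
  have := Nat.nth_count hpm
  rw [hcount] at this
  exact this

theorem count_forall {p : ℕ → Prop} [DecidablePred p] {N : ℕ}
    (h : ∀ m, N ≤ m → p m) : ∀ j, Nat.count p (N + j) = Nat.count p N + j := by
  intro j
  induction j with
  | zero => simp
  | succ j ih =>
    rw [← Nat.add_assoc, Nat.count_succ, ih, if_pos (h _ (by omega))]
    omega

theorem nth_forall {p : ℕ → Prop} [DecidablePred p] {N : ℕ}
    (h : ∀ m, N ≤ m → p m) {k : ℕ} (hk : Nat.count p N ≤ k) :
    Nat.nth p k = N + (k - Nat.count p N) := by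
  have hpm : p (N + (k - Nat.count p N)) := h _ (by omega)
  have hcount : Nat.count p (N + (k - Nat.count p N)) = k := by
    rw [count_forall h]; omega
  have := Nat.nth_count hpm
  rw [hcount] at this
  exact this

theorem sum_filter_eq_sum_nth (g : ℕ → ℤ) (p : ℕ → Prop) [DecidablePred p]
    (hp : (setOf p).Infinite) (N : ℕ) :
    ∑ i ∈ (Finset.range N).filter p, g i =
      ∑ k ∈ Finset.range (Nat.count p N), g (Nat.nth p k) := by
  apply Finset.sum_nbij' (i := fun i => Nat.count p i) (j := fun k => Nat.nth p k)
  · intro a ha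
    simp only [Finset.mem_filter, Finset.mem_range] at ha ⊢
    have : Nat.count p (a + 1) = Nat.count p a + 1 := by
      rw [Nat.count_succ, if_pos ha.2]
    have h2 : Nat.count p (a + 1) ≤ Nat.count p N := Nat.count_monotone p ha.1
    omega
  · intro b hb
    simp only [Finset.mem_filter, Finset.mem_range] at hb ⊢
    constructor
    · by_contra hc
      have := Nat.count_monotone p (le_of_not_gt hc)
      rw [Nat.count_nth_of_infinite hp] at this
      omega
    · exact Nat.nth_mem_of_infinite hp b
  · intro a ha
    simp only [Finset.mem_filter] at ha
    exact Nat.nth_count ha.2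
  · intro b _
    exact Nat.count_nth_of_infinite hp b
  · intro a ha
    simp only [Finset.mem_filter] at ha
    rw [Nat.nth_count ha.2]

theorem count_add_count_not (p : ℕ → Prop) [DecidablePred p] (N : ℕ) :
    Nat.count p N + Nat.count (fun i => ¬ p i) N = N := by
  rw [Nat.count_eq_card_filter_range, Nat.count_eq_card_filter_range]
  simpa using Finset.card_filter_add_card_filter_not (s := Finset.range N) (p := p)

theorem strictAnti_head_eq {s t : ℕ → ℤ} (hs : StrictAnti s) (ht : StrictAnti t)
    (h : ∀ x, (∃ i, s i = x) ↔ ∃ i, t i = x) : s 0 = t 0 := by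
  obtain ⟨i, hi⟩ := (h (s 0)).1 ⟨0, rfl⟩
  obtain ⟨j, hj⟩ := (h (t 0)).2 ⟨0, rfl⟩
  have h1 : t i ≤ t 0 := ht.antitone (Nat.zero_le i)
  have h2 : s j ≤ s 0 := hs.antitone (Nat.zero_le j)
  omega

theorem strictAnti_range_ext {s t : ℕ → ℤ} (hs : StrictAnti s) (ht : StrictAnti t)
    (h : ∀ x, (∃ i, s i = x) ↔ ∃ i, t i = x) : s = t := by
  funext n
  induction n generalizing s t with
  | zero => exact strictAnti_head_eq hs ht h
  | succ n ih =>
    have h0 : s 0 = t 0 := strictAnti_head_eq hs ht h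
    have hs' : StrictAnti (fun i => s (i + 1)) := fun a b hab => hs (by omega)
    have ht' : StrictAnti (fun i => t (i + 1)) := fun a b hab => ht (by omega)
    have key : ∀ (u : ℕ → ℤ), StrictAnti u → ∀ x,
        ((∃ i, u (i + 1) = x) ↔ (∃ i, u i = x) ∧ x ≠ u 0) := by
      intro u hu x
      constructor
      · rintro ⟨i, rfl⟩
        exact ⟨⟨i + 1, rfl⟩, ne_of_lt (hu (Nat.succ_pos i))⟩
      · rintro ⟨⟨i, rfl⟩, hne⟩
        cases i with
        | zero => exact absurd rfl hne
        | succ i => exact ⟨i, rfl⟩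
    exact ih hs' ht' fun x => by
      rw [key s hs x, key t ht x, h, h0]

theorem tail_charge_unique {q : ℕ → ℤ} {c c' : ℤ} {K K' : ℕ}
    (h : ∀ k, K ≤ k → q k = c - 1 - k) (h' : ∀ k, K' ≤ k → q k = c' - 1 - k) : c = c' := by
  have h1 := h (max K K') (le_max_left _ _)
  have h2 := h' (max K K') (le_max_right _ _)
  omega


/-- predicate: `s i` is even -/

def pe (s : ℕ → ℤ) : ℕ → Prop := fun i => s i % 2 = 0

/-- predicate: `s i` is odd -/
def po (s : ℕ → ℤ) : ℕ → Prop := fun i => ¬ s i % 2 = 0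

instance (s : ℕ → ℤ) : DecidablePred (pe s) := fun i => inferInstanceAs (Decidable (_ = _))
instance (s : ℕ → ℤ) : DecidablePred (po s) := fun i => inferInstanceAs (Decidable (¬ _ = _))

/-- even-indexed quotient sequence -/
noncomputable def q0 (s : ℕ → ℤ) (k : ℕ) : ℤ := s (Nat.nth (pe s) k) / 2

/-- odd-indexed quotient sequence -/
noncomputable def q1 (s : ℕ → ℤ) (k : ℕ) : ℤ := (s (Nat.nth (po s) k) - 1) / 2

theorem q0_def (s : ℕ → ℤ) (k : ℕ) : q0 s k = s (Nat.nth (pe s) k) / 2 := rfl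
theorem q1_def (s : ℕ → ℤ) (k : ℕ) : q1 s k = (s (Nat.nth (po s) k) - 1) / 2 := rfl
theorem pe_iff (s : ℕ → ℤ) (i : ℕ) : pe s i ↔ s i % 2 = 0 := Iff.rfl
theorem po_iff (s : ℕ → ℤ) (i : ℕ) : po s i ↔ ¬ s i % 2 = 0 := Iff.rfl

section Split
variable {s : ℕ → ℤ} {m : ℕ} (hs : StrictAnti s) (hN : ∀ i, 2 * m ≤ i → s i = -1 - i)
include hs hN

theorem pe_tail : ∀ i, 2 * m ≤ i → (pe s i ↔ i % 2 = 1) := by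
  intro i hi; rw [pe_iff, hN i hi]; omega

theorem po_tail : ∀ i, 2 * m ≤ i → (po s i ↔ i % 2 = 0) := by
  intro i hi; rw [po_iff, hN i hi]; omega

theorem pe_infinite : (setOf (pe s)).Infinite :=
  infinite_parity (by omega) (by omega) (pe_tail hs hN)

theorem po_infinite : (setOf (po s)).Infinite :=
  infinite_parity (by omega) (by omega) (po_tail hs hN)

theorem q0_strictAnti : StrictAnti (q0 s) := by
  intro a b hab
  have h1 : Nat.nth (pe s) a < Nat.nth (pe s) b := Nat.nth_strictMono (pe_infinite hs hN) hab
  have h2 : s (Nat.nth (pe s) b) < s (Nat.nth (pe s) a) := hs h1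
  have h3 : pe s (Nat.nth (pe s) a) := Nat.nth_mem_of_infinite (pe_infinite hs hN) a
  have h4 : pe s (Nat.nth (pe s) b) := Nat.nth_mem_of_infinite (pe_infinite hs hN) b
  rw [pe_iff] at h3 h4
  rw [q0_def, q0_def]
  omega

theorem q1_strictAnti : StrictAnti (q1 s) := by
  intro a b hab
  have h1 : Nat.nth (po s) a < Nat.nth (po s) b := Nat.nth_strictMono (po_infinite hs hN) hab
  have h2 : s (Nat.nth (po s) b) < s (Nat.nth (po s) a) := hs h1
  have h3 : po s (Nat.nth (po s) a) := Nat.nth_mem_of_infinite (po_infinite hs hN) a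
  have h4 : po s (Nat.nth (po s) b) := Nat.nth_mem_of_infinite (po_infinite hs hN) b
  rw [po_iff] at h3 h4
  rw [q1_def, q1_def]
  omega

theorem q0_tail : ∀ k, Nat.count (pe s) (2 * m) ≤ k →
    q0 s k = (Nat.count (pe s) (2 * m) : ℤ) - m - 1 - k := by
  intro k hk
  have h1 : Nat.nth (pe s) k = 2 * m + 2 * (k - Nat.count (pe s) (2 * m)) + 1 :=
    nth_parity (by omega) (by omega) (pe_tail hs hN) hk
  have h2 : s (Nat.nth (pe s) k) = -1 - (Nat.nth (pe s) k) := hN _ (by omega)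
  rw [q0_def, h2, h1]
  push_cast
  omega

theorem q1_tail : ∀ k, Nat.count (po s) (2 * m) ≤ k →
    q1 s k = (Nat.count (po s) (2 * m) : ℤ) - m - 1 - k := by
  intro k hk
  have h1 : Nat.nth (po s) k = 2 * m + 2 * (k - Nat.count (po s) (2 * m)) :=
    nth_parity (by omega) (by omega) (po_tail hs hN) hk
  have h2 : s (Nat.nth (po s) k) = -1 - (Nat.nth (po s) k) := hN _ (by omega)
  rw [q1_def, h2, h1]
  push_cast
  omega

theorem q0_range : ∀ a : ℤ, (∃ k, q0 s k = a) ↔ ∃ i, s i = 2 * a := by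
  intro a
  constructor
  · rintro ⟨k, rfl⟩
    have h3 : pe s (Nat.nth (pe s) k) := Nat.nth_mem_of_infinite (pe_infinite hs hN) k
    rw [pe_iff] at h3
    exact ⟨Nat.nth (pe s) k, by rw [q0_def]; omega⟩
  · rintro ⟨i, hi⟩
    have hp : pe s i := by rw [pe_iff]; omega
    refine ⟨Nat.count (pe s) i, ?_⟩
    rw [q0_def, Nat.nth_count hp]
    omega

theorem q1_range : ∀ a : ℤ, (∃ k, q1 s k = a) ↔ ∃ i, s i = 2 * a + 1 := by
  intro a
  constructor
  · rintro ⟨k, rfl⟩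
    have h3 : po s (Nat.nth (po s) k) := Nat.nth_mem_of_infinite (po_infinite hs hN) k
    rw [po_iff] at h3
    exact ⟨Nat.nth (po s) k, by rw [q1_def]; omega⟩
  · rintro ⟨i, hi⟩
    have hp : po s i := by rw [po_iff]; omega
    refine ⟨Nat.count (po s) i, ?_⟩
    rw [q1_def, Nat.nth_count hp]
    omega

theorem sum_split :
    ∑ i ∈ Finset.range (2 * m), s i =
      2 * ∑ k ∈ Finset.range (Nat.count (pe s) (2 * m)), q0 s k +
        2 * ∑ k ∈ Finset.range (Nat.count (po s) (2 * m)), q1 s k +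
          Nat.count (po s) (2 * m) := by
  have hsplit := Finset.sum_filter_add_sum_filter_not (Finset.range (2 * m)) (pe s) s
  have h0 : ∑ i ∈ (Finset.range (2 * m)).filter (pe s), s i =
      ∑ k ∈ Finset.range (Nat.count (pe s) (2 * m)), s (Nat.nth (pe s) k) :=
    sum_filter_eq_sum_nth s (pe s) (pe_infinite hs hN) (2 * m)
  have h1 : ∑ i ∈ (Finset.range (2 * m)).filter (fun i => ¬ pe s i), s i =
      ∑ k ∈ Finset.range (Nat.count (po s) (2 * m)), s (Nat.nth (po s) k) :=
    sum_filter_eq_sum_nth s (po s) (po_infinite hs hN) (2 * m)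
  have e0 : ∀ k, s (Nat.nth (pe s) k) = 2 * q0 s k := by
    intro k
    have h3 : pe s (Nat.nth (pe s) k) := Nat.nth_mem_of_infinite (pe_infinite hs hN) k
    rw [pe_iff] at h3; rw [q0_def]; omega
  have e1 : ∀ k, s (Nat.nth (po s) k) = 2 * q1 s k + 1 := by
    intro k
    have h3 : po s (Nat.nth (po s) k) := Nat.nth_mem_of_infinite (po_infinite hs hN) k
    rw [po_iff] at h3; rw [q1_def]; omega
  rw [← hsplit, h0, h1]
  rw [Finset.sum_congr rfl fun k _ => e0 k, Finset.sum_congr rfl fun k _ => e1 k]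
  rw [Finset.sum_add_distrib, Finset.sum_const, ← Finset.mul_sum, ← Finset.mul_sum]
  push_cast [Finset.card_range]
  ring
end Split


/-- the Maya/beta sequence of a Young diagram -/
noncomputable def sfun (μ : YoungDiagram) (i : ℕ) : ℤ := (μ.rowLen i : ℤ) - 1 - i

theorem sfun_def (μ : YoungDiagram) (i : ℕ) : sfun μ i = (μ.rowLen i : ℤ) - 1 - i := rfl

theorem sfun_strictAnti (μ : YoungDiagram) : StrictAnti (sfun μ) := by
  apply strictAnti_nat_of_succ_lt
  intro i
  have h := μ.rowLen_anti i (i + 1) (by omega)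
  rw [sfun_def, sfun_def]
  push_cast
  omega

theorem sfun_tail (μ : YoungDiagram) {m : ℕ} (hm : ∀ i, 2 * m ≤ i → μ.rowLen i = 0) :
    ∀ i, 2 * m ≤ i → sfun μ i = -1 - i := by
  intro i hi
  rw [sfun_def, hm i hi]
  push_cast
  ring

theorem count_pe_po (s : ℕ → ℤ) (M : ℕ) :
    Nat.count (pe s) M + Nat.count (po s) M = M := by
  induction M with
  | zero => simp
  | succ M ih =>
    rw [Nat.count_succ, Nat.count_succ]
    by_cases h : pe s M
    · rw [if_pos h, if_neg (fun hc => hc h)]; omega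
    · rw [if_neg h, if_pos (show po s M from h)]; omega

theorem count_cast_sum (p : ℕ → Prop) [DecidablePred p] (N : ℕ) :
    ((Nat.count p N : ℤ)) = ∑ i ∈ Finset.range N, if p i then (1 : ℤ) else 0 := by
  rw [Nat.count_eq_card_filter_range, Finset.card_filter]
  push_cast
  rfl

theorem sum_odd_indicator (m : ℕ) :
    ∑ i ∈ Finset.range (2 * m), (if i % 2 = 1 then (1 : ℤ) else 0) = m := by
  induction m with
  | zero => simp
  | succ m ih =>
    have h : 2 * (m + 1) = (2 * m) + 1 + 1 := by ring
    rw [h, Finset.sum_range_succ, Finset.sum_range_succ, ih,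
      if_neg (by omega), if_pos (by omega)]
    push_cast
    ring

theorem dcol0_charge (μ : YoungDiagram) {m : ℕ} (hm : ∀ i, 2 * m ≤ i → μ.rowLen i = 0) :
    dcol0 μ = (Nat.count (pe (sfun μ)) (2 * m) : ℤ) - m := by
  rw [dcol0_eq_sum μ (2 * m) hm]
  have key : ∀ i, rdiff i (μ.rowLen i) =
      (if pe (sfun μ) i then (1 : ℤ) else 0) - (if i % 2 = 1 then (1 : ℤ) else 0) := by
    intro i
    have hpe : pe (sfun μ) i ↔ ((μ.rowLen i : ℤ) - 1 - i) % 2 = 0 := Iff.rfl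
    unfold rdiff
    split_ifs with h1 h2 h3 h4 h5 h6 h7 <;>
      first
      | rfl
      | (exfalso; rw [hpe] at *; omega)
      | (rw [hpe] at *; omega)
  rw [Finset.sum_congr rfl fun i _ => key i, Finset.sum_sub_distrib,
    ← count_cast_sum (pe (sfun μ)) (2 * m), sum_odd_indicator]

theorem gauss (n : ℕ) : 2 * ∑ i ∈ Finset.range n, (i : ℤ) = n * (n - 1) := by
  induction n with
  | zero => simp
  | succ n ih =>
    rw [Finset.sum_range_succ]
    push_cast
    push_cast at ih
    linear_combination ih



theorem master (μ μ0 μ1 : YoungDiagram) {m : ℕ} (hm : ∀ i, 2 * m ≤ i → μ.rowLen i = 0)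
    (h0 : ∀ k, (μ0.rowLen k : ℤ) = q0 (sfun μ) k + 1 + k - dcol0 μ)
    (h1 : ∀ k, (μ1.rowLen k : ℤ) = q1 (sfun μ) k + 1 + k + dcol0 μ) :
    (μ.card : ℤ) = 2 * μ0.card + 2 * μ1.card + 2 * (dcol0 μ) ^ 2 - dcol0 μ := by
  set s := sfun μ with hsdef
  have hs : StrictAnti s := sfun_strictAnti μ
  have hN : ∀ i, 2 * m ≤ i → s i = -1 - i := sfun_tail μ hm
  set K0 := Nat.count (pe s) (2 * m) with hK0
  set K1 := Nat.count (po s) (2 * m) with hK1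
  set d := dcol0 μ with hddef
  have hd : d = (K0 : ℤ) - m := dcol0_charge μ hm
  have hK : K0 + K1 = 2 * m := count_pe_po s (2 * m)
  -- vanishing of quotient row lengths
  have hv0 : ∀ k, K0 ≤ k → μ0.rowLen k = 0 := by
    intro k hk
    have := h0 k
    rw [q0_tail hs hN k hk] at this
    have h2 : (μ0.rowLen k : ℤ) = 0 := by rw [this, hd]; ring
    exact_mod_cast h2
  have hv1 : ∀ k, K1 ≤ k → μ1.rowLen k = 0 := by
    intro k hk
    have := h1 k
    rw [q1_tail hs hN k hk] at this
    have hK1m : (K1 : ℤ) - m = -d := by rw [hd]; push_cast; omega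
    have h2 : (μ1.rowLen k : ℤ) = 0 := by rw [this, hK1m]; ring
    exact_mod_cast h2
  set S0 := ∑ k ∈ Finset.range K0, q0 s k with hS0
  set S1 := ∑ k ∈ Finset.range K1, q1 s k with hS1
  have e1 : (μ.card : ℤ) = 2 * S0 + 2 * S1 + K1 + 2 * m + ∑ i ∈ Finset.range (2 * m), (i : ℤ) := by
    rw [card_eq_sum_rowLen μ (2 * m) hm]
    push_cast
    have : ∀ i, (μ.rowLen i : ℤ) = s i + 1 + i := by
      intro i; rw [hsdef, sfun_def]; ring
    rw [Finset.sum_congr rfl fun i _ => this i]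
    simp only [Finset.sum_add_distrib, Finset.sum_const, Finset.card_range, nsmul_eq_mul, mul_one]
    rw [sum_split hs hN]
    push_cast
    ring
  have e2 : (μ0.card : ℤ) = S0 + K0 + (∑ k ∈ Finset.range K0, (k : ℤ)) - d * K0 := by
    rw [card_eq_sum_rowLen μ0 K0 hv0]
    push_cast
    rw [Finset.sum_congr rfl fun k _ => h0 k]
    simp only [Finset.sum_add_distrib, Finset.sum_sub_distrib, Finset.sum_const,
      Finset.card_range, nsmul_eq_mul, mul_one]
    ring
  have e3 : (μ1.card : ℤ) = S1 + K1 + (∑ k ∈ Finset.range K1, (k : ℤ)) + d * K1 := by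
    rw [card_eq_sum_rowLen μ1 K1 hv1]
    push_cast
    rw [Finset.sum_congr rfl fun k _ => h1 k]
    simp only [Finset.sum_add_distrib, Finset.sum_sub_distrib, Finset.sum_const,
      Finset.card_range, nsmul_eq_mul, mul_one]
    ring
  have g1 := gauss (2 * m)
  have g2 := gauss K0
  have g3 := gauss K1
  have ha : (K0 : ℤ) = d + m := by omega
  have hb : (K1 : ℤ) = m - d := by push_cast at hK ⊢; omega
  rw [ha] at e2 g2
  rw [hb] at e3 g3 e1
  push_cast at e1 e2 e3 g1 g2 g3
  linarith [e1, e2, e3, g1, g2, g3]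


theorem colLen_bound (μ : YoungDiagram) : ∀ i, 2 * μ.colLen 0 ≤ i → μ.rowLen i = 0 :=
  fun i hi => rowLen_eventually_zero μ i (by omega)

/-- integer row lengths of the first quotient -/
noncomputable def qr0 (μ : YoungDiagram) (k : ℕ) : ℤ := q0 (sfun μ) k + 1 + k - dcol0 μ

/-- integer row lengths of the second quotient -/
noncomputable def qr1 (μ : YoungDiagram) (k : ℕ) : ℤ := q1 (sfun μ) k + 1 + k + dcol0 μ

theorem qr0_def (μ : YoungDiagram) (k : ℕ) :
    qr0 μ k = q0 (sfun μ) k + 1 + k - dcol0 μ := rfl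

theorem qr1_def (μ : YoungDiagram) (k : ℕ) :
    qr1 μ k = q1 (sfun μ) k + 1 + k + dcol0 μ := rfl

theorem qr0_tail (μ : YoungDiagram) :
    ∀ k, Nat.count (pe (sfun μ)) (2 * μ.colLen 0) ≤ k → qr0 μ k = 0 := by
  intro k hk
  rw [qr0_def, q0_tail (sfun_strictAnti μ) (sfun_tail μ (colLen_bound μ)) k hk,
    dcol0_charge μ (colLen_bound μ)]
  ring

theorem qr1_tail (μ : YoungDiagram) :
    ∀ k, Nat.count (po (sfun μ)) (2 * μ.colLen 0) ≤ k → qr1 μ k = 0 := by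
  intro k hk
  rw [qr1_def, q1_tail (sfun_strictAnti μ) (sfun_tail μ (colLen_bound μ)) k hk,
    dcol0_charge μ (colLen_bound μ)]
  have := count_pe_po (sfun μ) (2 * μ.colLen 0)
  push_cast
  omega

theorem qr0_antitone (μ : YoungDiagram) : Antitone (qr0 μ) := by
  apply antitone_nat_of_succ_le
  intro k
  have := q0_strictAnti (sfun_strictAnti μ) (sfun_tail μ (colLen_bound μ)) (lt_add_one k)
  rw [qr0_def, qr0_def]
  push_cast
  omega

theorem qr1_antitone (μ : YoungDiagram) : Antitone (qr1 μ) := by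
  apply antitone_nat_of_succ_le
  intro k
  have := q1_strictAnti (sfun_strictAnti μ) (sfun_tail μ (colLen_bound μ)) (lt_add_one k)
  rw [qr1_def, qr1_def]
  push_cast
  omega

theorem qr0_nonneg (μ : YoungDiagram) (k : ℕ) : 0 ≤ qr0 μ k := by
  have h0 : qr0 μ (max k (Nat.count (pe (sfun μ)) (2 * μ.colLen 0))) = 0 :=
    qr0_tail μ _ (le_max_right _ _)
  have h1 := qr0_antitone μ (le_max_left k (Nat.count (pe (sfun μ)) (2 * μ.colLen 0)))
  omega

theorem qr1_nonneg (μ : YoungDiagram) (k : ℕ) : 0 ≤ qr1 μ k := by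
  have h0 : qr1 μ (max k (Nat.count (po (sfun μ)) (2 * μ.colLen 0))) = 0 :=
    qr1_tail μ _ (le_max_right _ _)
  have h1 := qr1_antitone μ (le_max_left k (Nat.count (po (sfun μ)) (2 * μ.colLen 0)))
  omega

/-- first 2-quotient of a Young diagram -/
noncomputable def phi0 (μ : YoungDiagram) : YoungDiagram :=
  ofFn (fun k => (qr0 μ k).toNat)
    (fun a b hab => Int.toNat_le_toNat (qr0_antitone μ hab))
    (Nat.count (pe (sfun μ)) (2 * μ.colLen 0))
    (fun k hk => by show (qr0 μ k).toNat = 0; rw [qr0_tail μ k hk]; rfl)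

/-- second 2-quotient of a Young diagram -/
noncomputable def phi1 (μ : YoungDiagram) : YoungDiagram :=
  ofFn (fun k => (qr1 μ k).toNat)
    (fun a b hab => Int.toNat_le_toNat (qr1_antitone μ hab))
    (Nat.count (po (sfun μ)) (2 * μ.colLen 0))
    (fun k hk => by show (qr1 μ k).toNat = 0; rw [qr1_tail μ k hk]; rfl)

theorem phi0_rowLen (μ : YoungDiagram) (k : ℕ) : ((phi0 μ).rowLen k : ℤ) = qr0 μ k := by
  rw [show (phi0 μ).rowLen k = (qr0 μ k).toNat from rowLen_ofFn _ _ _ _ k]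
  exact Int.toNat_of_nonneg (qr0_nonneg μ k)

theorem phi1_rowLen (μ : YoungDiagram) (k : ℕ) : ((phi1 μ).rowLen k : ℤ) = qr1 μ k := by
  rw [show (phi1 μ).rowLen k = (qr1 μ k).toNat from rowLen_ofFn _ _ _ _ k]
  exact Int.toNat_of_nonneg (qr1_nonneg μ k)

theorem phi_card (μ : YoungDiagram) :
    (μ.card : ℤ) = 2 * (phi0 μ).card + 2 * (phi1 μ).card + 2 * (dcol0 μ) ^ 2 - dcol0 μ :=
  master μ (phi0 μ) (phi1 μ) (colLen_bound μ)
    (fun k => by rw [phi0_rowLen, qr0_def])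
    (fun k => by rw [phi1_rowLen, qr1_def])

theorem phi_injective (μ ν : YoungDiagram) (hd : dcol0 μ = dcol0 ν)
    (h0 : phi0 μ = phi0 ν) (h1 : phi1 μ = phi1 ν) : μ = ν := by
  have hq0 : ∀ k, q0 (sfun μ) k = q0 (sfun ν) k := by
    intro k
    have e1 := phi0_rowLen μ k
    have e2 := phi0_rowLen ν k
    rw [h0] at e1
    rw [qr0_def] at e1 e2
    omega
  have hq1 : ∀ k, q1 (sfun μ) k = q1 (sfun ν) k := by
    intro k
    have e1 := phi1_rowLen μ k
    have e2 := phi1_rowLen ν k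
    rw [h1] at e1
    rw [qr1_def] at e1 e2
    omega
  have hrange : ∀ x, (∃ i, sfun μ i = x) ↔ (∃ i, sfun ν i = x) := by
    intro x
    rcases Int.even_or_odd x with ⟨a, ha⟩ | ⟨a, ha⟩
    · rw [show x = 2 * a by omega,
        ← q0_range (sfun_strictAnti μ) (sfun_tail μ (colLen_bound μ)),
        ← q0_range (sfun_strictAnti ν) (sfun_tail ν (colLen_bound ν))]
      constructor <;> (rintro ⟨k, hk⟩; exact ⟨k, by rw [← hk, hq0 k]⟩) <;> skip
    · rw [show x = 2 * a + 1 by omega,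
        ← q1_range (sfun_strictAnti μ) (sfun_tail μ (colLen_bound μ)),
        ← q1_range (sfun_strictAnti ν) (sfun_tail ν (colLen_bound ν))]
      constructor <;> (rintro ⟨k, hk⟩; exact ⟨k, by rw [← hk, hq1 k]⟩)
  have hseq : sfun μ = sfun ν :=
    strictAnti_range_ext (sfun_strictAnti μ) (sfun_strictAnti ν) hrange
  apply eq_of_rowLen_eq
  intro i
  have e1 := sfun_def μ i
  have e2 := sfun_def ν i
  rw [hseq] at e1
  omega


theorem seq_threshold {t : ℕ → ℤ} (ht : StrictAnti t) {c : ℤ} {Kb : ℕ}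
    (htail : ∀ k, Kb ≤ k → t k = c - 1 - k) {y : ℤ} (hy : (Kb : ℤ) ≤ c - 1 - y) :
    ∀ k : ℕ, (y ≤ t k ↔ (k : ℤ) ≤ c - 1 - y) := by
  intro k
  constructor
  · intro h
    by_contra hc
    have hk : Kb ≤ k := by omega
    rw [htail k hk] at h
    omega
  · intro h
    rcases le_or_gt Kb k with hk | hk
    · rw [htail k hk]; omega
    · have h1 : t Kb ≤ t k := ht.antitone (by omega)
      rw [htail Kb le_rfl] at h1
      omega

theorem card_filter_shift {t : ℕ → ℤ} (ht : StrictAnti t) {c : ℤ} {Kb : ℕ}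
    (htail : ∀ k, Kb ≤ k → t k = c - 1 - k) {r B : ℤ} (hr0 : 0 ≤ r) (hr1 : r ≤ 1)
    (hB : ∀ k, 2 * t k + r ≤ B - 1) {Cv M0 A : ℕ}
    (hM0 : (M0 : ℤ) = B + 2 * Cv) (hA : (A : ℤ) = c + Cv)
    (hy : (Kb : ℤ) ≤ c - 1 + Cv)
    [DecidablePred fun mm : ℕ => ∃ k, 2 * t k + r = B - 1 - mm] :
    ((Finset.range M0).filter fun mm : ℕ => ∃ k, 2 * t k + r = B - 1 - mm).card = A := by
  have hthr := seq_threshold ht htail (y := -(Cv : ℤ)) (by omega)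
  rw [← Finset.card_range A]
  symm
  apply Finset.card_bij (fun k _ => (B - 1 - (2 * t k + r)).toNat)
  · intro k hk
    rw [Finset.mem_range] at hk
    have htk : -(Cv : ℤ) ≤ t k := (hthr k).2 (by omega)
    have hBk := hB k
    have hcast : ((B - 1 - (2 * t k + r)).toNat : ℤ) = B - 1 - (2 * t k + r) :=
      Int.toNat_of_nonneg (by omega)
    rw [Finset.mem_filter, Finset.mem_range]
    constructor
    · have : ((B - 1 - (2 * t k + r)).toNat : ℤ) < M0 := by omega
      exact_mod_cast this
    · exact ⟨k, by omega⟩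
  · intro k hk k' hk' heq
    have hBk := hB k
    have hBk' := hB k'
    have hc1 : ((B - 1 - (2 * t k + r)).toNat : ℤ) = B - 1 - (2 * t k + r) :=
      Int.toNat_of_nonneg (by omega)
    have hc2 : ((B - 1 - (2 * t k' + r)).toNat : ℤ) = B - 1 - (2 * t k' + r) :=
      Int.toNat_of_nonneg (by omega)
    have : t k = t k' := by
      have := congrArg (fun x : ℕ => (x : ℤ)) heq
      omega
    exact ht.injective this
  · intro mm hmm
    rw [Finset.mem_filter, Finset.mem_range] at hmm
    obtain ⟨hlt, k, hk⟩ := hmm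
    have htk : -(Cv : ℤ) ≤ t k := by omega
    refine ⟨k, Finset.mem_range.2 ?_, ?_⟩
    · have := (hthr k).1 htk
      omega
    · omega




theorem merge_exists (t0 t1 : ℕ → ℤ) (d : ℤ) (K0b K1b : ℕ)
    (ht0 : StrictAnti t0) (ht1 : StrictAnti t1)
    (ht0tail : ∀ k, K0b ≤ k → t0 k = d - 1 - k)
    (ht1tail : ∀ k, K1b ≤ k → t1 k = -d - 1 - k) :
    ∃ (s : ℕ → ℤ) (m : ℕ), StrictAnti s ∧ (∀ i, 2 * m ≤ i → s i = -1 - i) ∧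
      (∀ x : ℤ, (∃ i, s i = x) ↔ ((∃ k, 2 * t0 k = x) ∨ (∃ k, 2 * t1 k + 1 = x))) := by
  classical
  set B : ℤ := max (2 * t0 0) (2 * t1 0 + 1) + 1 with hBdef
  have hB0 : ∀ k, 2 * t0 k + 0 ≤ B - 1 := by
    intro k
    have := ht0.antitone (Nat.zero_le k)
    have := le_max_left (2 * t0 0) (2 * t1 0 + 1)
    omega
  have hB1 : ∀ k, 2 * t1 k + 1 ≤ B - 1 := by
    intro k
    have := ht1.antitone (Nat.zero_le k)
    have := le_max_right (2 * t0 0) (2 * t1 0 + 1)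
    omega
  set Cv : ℕ := K0b + K1b + d.natAbs + B.natAbs + 2 with hCv
  have habsd : (d.natAbs : ℤ) = |d| := Int.natCast_natAbs d
  have habsB : (B.natAbs : ℤ) = |B| := Int.natCast_natAbs B
  have hCd : (Cv : ℤ) ≥ K0b + K1b + |d| + |B| + 2 := by
    rw [hCv]; push_cast; omega
  set M0 : ℕ := (B + 2 * Cv).toNat with hM0def
  have hM0 : (M0 : ℤ) = B + 2 * Cv := by
    rw [hM0def, Int.toNat_of_nonneg (by cases abs_cases B <;> omega)]
  set P : ℕ → Prop := fun mm => ((∃ k, 2 * t0 k = B - 1 - mm) ∨ (∃ k, 2 * t1 k + 1 = B - 1 - mm))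
    with hPdef
  have habs : |d| ≥ d ∧ |d| ≥ -d := ⟨le_abs_self d, neg_le_abs d⟩
  -- all sufficiently large m satisfy P
  have hPtail : ∀ mm, M0 ≤ mm → P mm := by
    intro mm hmm
    have hx : B - 1 - mm ≤ -(2 * Cv) - 1 := by
      have : (M0 : ℤ) ≤ mm := by exact_mod_cast hmm
      omega
    rcases Int.even_or_odd (B - 1 - mm) with ⟨a, ha⟩ | ⟨a, ha⟩
    · left
      refine ⟨(d - 1 - a).toNat, ?_⟩
      have hk : ((d - 1 - a).toNat : ℤ) = d - 1 - a := Int.toNat_of_nonneg (by omega)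
      rw [ht0tail _ (by omega), hk]
      omega
    · right
      refine ⟨(-d - 1 - a).toNat, ?_⟩
      have hk : ((-d - 1 - a).toNat : ℤ) = -d - 1 - a := Int.toNat_of_nonneg (by omega)
      rw [ht1tail _ (by omega), hk]
      omega
  have hPinf : (setOf P).Infinite := by
    apply Set.infinite_of_injective_forall_mem (f := fun j : ℕ => M0 + j)
      (hi := fun a b hab => by dsimp at hab; omega)
    intro j
    show P (M0 + j)
    exact hPtail _ (by omega)
  -- the count of P below M0 is 2 * Cv
  have hcount : Nat.count P M0 = 2 * Cv := by
    rw [Nat.count_eq_card_filter_range]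
    have hsplit : (Finset.range M0).filter P =
        ((Finset.range M0).filter fun mm : ℕ => ∃ k, 2 * t0 k + 0 = B - 1 - mm) ∪
          ((Finset.range M0).filter fun mm : ℕ => ∃ k, 2 * t1 k + 1 = B - 1 - mm) := by
      rw [← Finset.filter_or]
      apply Finset.filter_congr
      intro mm _
      simp only [hPdef, add_zero]
    rw [hsplit, Finset.card_union_of_disjoint]
    · have hc0 : ((Finset.range M0).filter fun mm : ℕ => ∃ k, 2 * t0 k + 0 = B - 1 - mm).card
          = (d + Cv).toNat :=
        card_filter_shift ht0 ht0tail (by omega) (by omega) hB0 hM0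
          (Int.toNat_of_nonneg (by omega)) (by omega)
      have hc1 : ((Finset.range M0).filter fun mm : ℕ => ∃ k, 2 * t1 k + 1 = B - 1 - mm).card
          = (-d + Cv).toNat :=
        card_filter_shift ht1 ht1tail (by omega) (by omega) hB1 hM0
          (Int.toNat_of_nonneg (by omega)) (by omega)
      rw [hc0, hc1]
      omega
    · simp only [Finset.disjoint_left, Finset.mem_filter, Finset.mem_range]
      rintro mm ⟨-, k0, hk0⟩ ⟨-, k1, hk1⟩
      omega
  -- the merged sequence
  refine ⟨fun i => B - 1 - Nat.nth P i, 2 * Cv, ?_, ?_, ?_⟩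
  · intro a b hab
    show B - 1 - (Nat.nth P b : ℤ) < B - 1 - (Nat.nth P a : ℤ)
    have := Nat.nth_strictMono hPinf hab
    have h1 : (Nat.nth P a : ℤ) < Nat.nth P b := by exact_mod_cast this
    omega
  · intro i hi
    have hi' : Nat.count P M0 ≤ i := by omega
    show B - 1 - (Nat.nth P i : ℤ) = -1 - i
    rw [nth_forall hPtail hi', hcount]
    have h2 : 2 * (2 * (Cv : ℤ)) ≤ (i : ℤ) := by exact_mod_cast hi
    push_cast
    omega
  · intro x
    constructor
    · rintro ⟨i, rfl⟩
      show P (Nat.nth P i)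
      exact Nat.nth_mem_of_infinite hPinf i
    · intro hx
      have hxB : x ≤ B - 1 := by
        rcases hx with ⟨k, hk⟩ | ⟨k, hk⟩
        · have := hB0 k; omega
        · have := hB1 k; omega
      refine ⟨Nat.count P (B - 1 - x).toNat, ?_⟩
      have hcast : ((B - 1 - x).toNat : ℤ) = B - 1 - x := Int.toNat_of_nonneg (by omega)
      have hPm : P (B - 1 - x).toNat := by
        rw [hPdef]
        rcases hx with ⟨k, hk⟩ | ⟨k, hk⟩
        · exact Or.inl ⟨k, by omega⟩
        · exact Or.inr ⟨k, by omega⟩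
      show B - 1 - (Nat.nth P (Nat.count P (B - 1 - x).toNat) : ℤ) = x
      rw [Nat.nth_count hPm]
      omega


theorem merge_diagram (d : ℤ) (μ0 μ1 : YoungDiagram) :
    ∃ lam : YoungDiagram, dcol0 lam = d ∧ phi0 lam = μ0 ∧ phi1 lam = μ1 ∧
      (lam.card : ℤ) = 2 * μ0.card + 2 * μ1.card + 2 * d ^ 2 - d := by
  set t0 : ℕ → ℤ := fun k => sfun μ0 k + d with ht0def
  set t1 : ℕ → ℤ := fun k => sfun μ1 k - d with ht1def
  have ht0 : StrictAnti t0 := fun a b hab => by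
    have := sfun_strictAnti μ0 hab
    show sfun μ0 b + d < sfun μ0 a + d
    omega
  have ht1 : StrictAnti t1 := fun a b hab => by
    have := sfun_strictAnti μ1 hab
    show sfun μ1 b - d < sfun μ1 a - d
    omega
  have ht0tail : ∀ k, 2 * μ0.colLen 0 ≤ k → t0 k = d - 1 - k := by
    intro k hk
    show sfun μ0 k + d = d - 1 - k
    rw [sfun_tail μ0 (colLen_bound μ0) k hk]
    ring
  have ht1tail : ∀ k, 2 * μ1.colLen 0 ≤ k → t1 k = -d - 1 - k := by
    intro k hk
    show sfun μ1 k - d = -d - 1 - k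
    rw [sfun_tail μ1 (colLen_bound μ1) k hk]
    ring
  obtain ⟨s, m, hs, hN, hrange⟩ :=
    merge_exists t0 t1 d (2 * μ0.colLen 0) (2 * μ1.colLen 0) ht0 ht1 ht0tail ht1tail
  -- nonnegativity of s i + 1 + i
  have hsalt : Antitone (fun i => s i + i) := by
    apply antitone_nat_of_succ_le
    intro n
    have := hs (lt_add_one n)
    push_cast
    omega
  have hnn : ∀ i : ℕ, -(1 : ℤ) - (i : ℤ) ≤ s i := by
    intro i
    have h1 : s (max i (2 * m)) + (max i (2 * m) : ℕ) ≤ s i + i := hsalt (le_max_left _ _)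
    rw [hN _ (le_max_right _ _)] at h1
    omega
  -- the merged Young diagram
  set f : ℕ → ℕ := fun i => (s i + 1 + i).toNat with hfdef
  have hfanti : Antitone f := by
    intro a b hab
    apply Int.toNat_le_toNat
    have := hsalt hab
    simp only at this
    omega
  have hfvan : ∀ i, 2 * m ≤ i → f i = 0 := by
    intro i hi
    show (s i + 1 + i).toNat = 0
    rw [hN i hi]
    omega
  set lam : YoungDiagram := ofFn f hfanti (2 * m) hfvan with hlamdef
  have hsfun : sfun lam = s := by
    funext i
    rw [sfun_def, hlamdef, rowLen_ofFn]
    show ((s i + 1 + i).toNat : ℤ) - 1 - i = s i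
    rw [Int.toNat_of_nonneg (by have := hnn i; omega)]
    ring
  have hmvan : ∀ i, 2 * m ≤ i → lam.rowLen i = 0 := by
    intro i hi
    rw [hlamdef, rowLen_ofFn]
    exact hfvan i hi
  -- identify the split sequences
  have hq0 : q0 (sfun lam) = t0 := by
    apply strictAnti_range_ext (q0_strictAnti (by rwa [hsfun]) (by rwa [hsfun])) ht0
    intro a
    rw [hsfun]
    rw [q0_range hs hN a]
    rw [hrange (2 * a)]
    constructor
    · rintro (⟨k, hk⟩ | ⟨k, hk⟩)
      · exact ⟨k, by omega⟩
      · exfalso; omega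
    · rintro ⟨k, hk⟩
      exact Or.inl ⟨k, by omega⟩
  have hq1 : q1 (sfun lam) = t1 := by
    apply strictAnti_range_ext (q1_strictAnti (by rwa [hsfun]) (by rwa [hsfun])) ht1
    intro a
    rw [hsfun]
    rw [q1_range hs hN a]
    rw [hrange (2 * a + 1)]
    constructor
    · rintro (⟨k, hk⟩ | ⟨k, hk⟩)
      · exfalso; omega
      · exact ⟨k, by omega⟩
    · rintro ⟨k, hk⟩
      exact Or.inr ⟨k, by omega⟩
  -- the charge of lam is d
  have hd : dcol0 lam = d := by
    have hch : dcol0 lam = (Nat.count (pe (sfun lam)) (2 * m) : ℤ) - m := by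
      have := dcol0_charge lam (m := m) hmvan
      convert this using 3 <;> rw [hsfun]
    have htail1 : ∀ k, Nat.count (pe (sfun lam)) (2 * m) ≤ k →
        q0 (sfun lam) k = ((Nat.count (pe (sfun lam)) (2 * m) : ℤ) - m) - 1 - k := by
      intro k hk
      have h2 : ∀ k, Nat.count (pe (sfun lam)) (2 * m) ≤ k →
          q0 (sfun lam) k = (Nat.count (pe (sfun lam)) (2 * m) : ℤ) - m - 1 - k := by
        have hs' : StrictAnti (sfun lam) := by rwa [hsfun]
        have hN' : ∀ i, 2 * m ≤ i → sfun lam i = -1 - i := by rwa [hsfun]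
        exact q0_tail hs' hN'
      rw [h2 k hk]
    have htail2 : ∀ k, 2 * μ0.colLen 0 ≤ k → q0 (sfun lam) k = d - 1 - k := by
      intro k hk
      rw [hq0]
      exact ht0tail k hk
    rw [hch]
    exact tail_charge_unique htail1 htail2
  have hphi0 : phi0 lam = μ0 := by
    apply eq_of_rowLen_eq
    intro k
    have h1 := phi0_rowLen lam k
    rw [qr0_def, hq0, hd] at h1
    have h2 : (t0 k : ℤ) + 1 + k - d = μ0.rowLen k := by
      rw [ht0def]
      show sfun μ0 k + d + 1 + k - d = _
      rw [sfun_def]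
      ring
    omega
  have hphi1 : phi1 lam = μ1 := by
    apply eq_of_rowLen_eq
    intro k
    have h1 := phi1_rowLen lam k
    rw [qr1_def, hq1, hd] at h1
    have h2 : (t1 k : ℤ) + 1 + k + d = μ1.rowLen k := by
      rw [ht1def]
      show sfun μ1 k - d + 1 + k + d = _
      rw [sfun_def]
      ring
    omega
  refine ⟨lam, hd, hphi0, hphi1, ?_⟩
  have := phi_card lam
  rw [hphi0, hphi1, hd] at this
  exact this

end GFC

/-- Coefficientwise form of `∑_{λ : d(λ)=d} x^{(|λ|-(2d²-d))/2} = ∏_{k≥1} (1-x^k)⁻²`: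
the number of partitions `λ` with `d(λ) = d` and `|λ| = 2d² - d + 2n` equals the
number of ordered pairs of partitions of total size `n`. -/
theorem generating_function_color0 (d : ℤ) (n : ℕ) :
    Nonempty
      ({lam : YoungDiagram // dcol0 lam = d ∧ (lam.card : ℤ) = 2 * d ^ 2 - d + 2 * n} ≃
        {p : YoungDiagram × YoungDiagram // p.1.card + p.2.card = n}) := by
  constructor
  refine Equiv.ofBijective (fun x => ⟨(GFC.phi0 x.1, GFC.phi1 x.1), ?_⟩) ⟨?_, ?_⟩
  · obtain ⟨hd, hcard⟩ := x.2
    have hpc := GFC.phi_card x.1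
    rw [hd] at hpc
    have h4 : 2 * ((GFC.phi0 x.1).card : ℤ) + 2 * ((GFC.phi1 x.1).card : ℤ) = 2 * n := by
      linarith
    have h5 : ((GFC.phi0 x.1).card : ℤ) + ((GFC.phi1 x.1).card : ℤ) = (n : ℤ) := by linarith
    exact_mod_cast h5
  · intro x y h
    simp only [Subtype.mk.injEq, Prod.mk.injEq] at h
    exact Subtype.ext (GFC.phi_injective x.1 y.1 (x.2.1.trans y.2.1.symm) h.1 h.2)
  · rintro ⟨⟨μ0, μ1⟩, hp⟩
    obtain ⟨lam, hd, h0, h1, hcard⟩ := GFC.merge_diagram d μ0 μ1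
    have hn : ((μ0.card : ℤ) + (μ1.card : ℤ)) = (n : ℤ) := by exact_mod_cast hp
    refine ⟨⟨lam, hd, by rw [hcard]; linarith⟩, ?_⟩
    simp only [Subtype.mk.injEq, Prod.mk.injEq]
    exact ⟨h0, h1⟩
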